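/- arXiv:1901.08709 — 3 statements merged into one kernel-verified Lean document; each statement's English description precedes it below -/
import Mathlib

section
/- Let X be a metric space and let D be a dense subset of X such that every Cauchy sequence of points of D converges in X. Then X is a Baire space. -/
open Filter Topology

theorem stmt_1 {X : Type*} [MetricSpace X] (D : Set X) (hD : Dense D)
    (hconv : ∀ u : ℕ → X, (∀ n, u n ∈ D) → CauchySeq u →
      ∃ x : X, Tendsto u atTop (𝓝 x)) :
    BaireSpace X := by
  have : CompleteSpace X := by
    apply Metric.complete_of_cauchySeq_tendsto
    intro u hu
    have hchoice : ∀ n : ℕ, ∃ d ∈ D, dist (u n) d < 1 / (n + 1) := fun n =>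
      hD.exists_dist_lt (u n) (by positivity)
    choose d hdD hdist using hchoice
    have hdistto : Tendsto (fun n : ℕ => dist (u n) (d n)) atTop (𝓝 0) := by
      apply squeeze_zero (fun n => dist_nonneg) (fun n => (hdist n).le)
      exact tendsto_one_div_add_atTop_nhds_zero_nat
    have hdcauchy : CauchySeq d := by
      rw [Metric.cauchySeq_iff]
      intro ε hε
      rw [Metric.cauchySeq_iff] at hu
      obtain ⟨N1, hN1⟩ := hu (ε / 3) (by linarith)
      obtain ⟨N2, hN2⟩ := (Metric.tendsto_atTop.1 hdistto) (ε / 3) (by linarith)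
      refine ⟨max N1 N2, fun m hm n hn => ?_⟩
      have h1 := hN1 m (le_of_max_le_left hm) n (le_of_max_le_left hn)
      have h2 := hN2 m (le_of_max_le_right hm)
      have h3 := hN2 n (le_of_max_le_right hn)
      simp only [Real.dist_eq, abs_sub_lt_iff] at h2 h3
      calc dist (d m) (d n) ≤ dist (d m) (u m) + dist (u m) (u n) + dist (u n) (d n) :=
            dist_triangle4 _ _ _ _
        _ < ε := by rw [dist_comm (d m)]; linarith [h2.1, h3.1]
    obtain ⟨x, hx⟩ := hconv d hdD hdcauchy
    refine ⟨x, ?_⟩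
    have : Tendsto (fun n => dist (u n) x) atTop (𝓝 0) := by
      have hx0 := (tendsto_iff_dist_tendsto_zero.1 hx)
      have hsum : Tendsto (fun n => dist (u n) (d n) + dist (d n) x) atTop (𝓝 0) := by
        simpa using hdistto.add hx0
      exact squeeze_zero (fun n => dist_nonneg) (fun n => dist_triangle _ _ _) hsum
    exact tendsto_iff_dist_tendsto_zero.2 this
  infer_instance
end

section
/- Let X be a metric space that is densely complete with respect to a dense set D, and let K ⊆ X be closed. Then the metric subspace K is densely complete, i.e., there exists a dense subset E of K such that every Cauchy sequence of points of E converges in K. -/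
open Filter Topology

theorem stmt_14 {X : Type*} [MetricSpace X] (D : Set X) (hD : Dense D)
    (hconv : ∀ u : ℕ → X, (∀ n, u n ∈ D) → CauchySeq u →
      ∃ x, Tendsto u atTop (𝓝 x))
    (K : Set X) (hK : IsClosed K) :
    ∃ E : Set X, E ⊆ K ∧ K ⊆ closure E ∧
      ∀ u : ℕ → X, (∀ n, u n ∈ E) → CauchySeq u →
        ∃ x ∈ K, Tendsto u atTop (𝓝 x) := by
  refine ⟨K, subset_rfl, subset_closure, fun u hu hcau => ?_⟩
  have hex : ∀ n : ℕ, ∃ y ∈ D, dist (u n) y < 1 / (n + 1) := by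
    intro n
    exact hD.exists_dist_lt (u n) (by positivity)
  choose v hvD hv using hex
  have hdist0 : Tendsto (fun n => dist (u n) (v n)) atTop (𝓝 0) := by
    apply squeeze_zero (fun n => dist_nonneg) (fun n => (hv n).le)
    exact tendsto_one_div_add_atTop_nhds_zero_nat
  have hvcau : CauchySeq v := by
    rw [Metric.cauchySeq_iff] at hcau ⊢
    intro ε hε
    obtain ⟨N1, hN1⟩ := hcau (ε / 3) (by linarith)
    obtain ⟨N2, hN2⟩ := (Metric.tendsto_atTop.1 hdist0) (ε / 3) (by linarith)
    refine ⟨max N1 N2, fun m hm n hn => ?_⟩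
    have h1 := hN1 m (le_of_max_le_left hm) n (le_of_max_le_left hn)
    have h2 := hN2 m (le_of_max_le_right hm)
    have h3 := hN2 n (le_of_max_le_right hn)
    rw [Real.dist_eq, abs_lt] at h2 h3
    calc dist (v m) (v n) ≤ dist (v m) (u m) + dist (u m) (u n) + dist (u n) (v n) :=
          dist_triangle4 _ _ _ _
      _ < ε := by rw [dist_comm (v m)] at *; linarith [h2.2, h3.2, h1]
  obtain ⟨x, hx⟩ := hconv v hvD hvcau
  have hux : Tendsto u atTop (𝓝 x) := by
    rw [tendsto_iff_dist_tendsto_zero] at hx ⊢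
    apply squeeze_zero (fun n => dist_nonneg)
      (fun n => dist_triangle (u n) (v n) x)
    simpa using hdist0.add hx
  exact ⟨x, hK.mem_of_tendsto hux (Eventually.of_forall hu), hux⟩
end

section
/- Let C be a countably infinite subset of ℝ such that the metric subspace C of ℝ is not complete. Then the metric subspace ℝ × C of ℝ² (with the Euclidean metric) is not densely complete: there is no dense subset D of ℝ × C such that every Cauchy sequence of points of D converges in ℝ × C. -/
open Filter Topology

theorem stmt_15 (C : Set ℝ) (hCc : C.Countable) (hCi : C.Infinite)
    (hCnc : ∃ u : ℕ → ℝ, (∀ n, u n ∈ C) ∧ CauchySeq u ∧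
      ¬ ∃ x ∈ C, Tendsto u atTop (𝓝 x)) :
    ¬ ∃ D : Set (ℝ × ℝ), D ⊆ Set.univ ×ˢ C ∧ (Set.univ ×ˢ C : Set (ℝ × ℝ)) ⊆ closure D ∧
      ∀ u : ℕ → ℝ × ℝ, (∀ n, u n ∈ D) → CauchySeq u →
        ∃ p ∈ (Set.univ ×ˢ C : Set (ℝ × ℝ)), Tendsto u atTop (𝓝 p) := by
  rintro ⟨D, hD, hdense, hcomp⟩
  obtain ⟨u, huC, hcu, hnl⟩ := hCnc
  obtain ⟨x, hx⟩ := cauchySeq_tendsto_of_complete hcu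
  have hchoice : ∀ n : ℕ, ∃ b ∈ D, dist ((0:ℝ), u n) b < 1/(n+1) := fun n =>
    Metric.mem_closure_iff.mp (hdense ⟨Set.mem_univ _, huC n⟩) _ (by positivity)
  choose d hdD hdd using hchoice
  have htend0 : Tendsto (fun n => ((0:ℝ), u n)) atTop (𝓝 ((0:ℝ), x)) :=
    tendsto_const_nhds.prodMk_nhds hx
  have hdist : Tendsto (fun n => dist (d n) ((0:ℝ), u n)) atTop (𝓝 0) := by
    apply squeeze_zero (fun n => dist_nonneg) (fun n => (dist_comm (d n) _ ▸ (hdd n).le))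
    exact tendsto_one_div_add_atTop_nhds_zero_nat
  have hdtend : Tendsto d atTop (𝓝 ((0:ℝ), x)) := by
    rw [tendsto_iff_dist_tendsto_zero]
    have h2 : Tendsto (fun n => dist ((0:ℝ), u n) ((0:ℝ), x)) atTop (𝓝 0) := by
      rw [← tendsto_iff_dist_tendsto_zero]; exact htend0
    have := hdist.add h2
    rw [add_zero] at this
    exact squeeze_zero (fun n => dist_nonneg) (fun n => dist_triangle _ _ _) this
  obtain ⟨p, hpC, hp⟩ := hcomp d hdD hdtend.cauchySeq
  have hpe : p = ((0:ℝ), x) := tendsto_nhds_unique hp hdtend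
  exact hnl ⟨x, (hpe ▸ hpC).2, hx⟩
end
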